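/- Let Ω = (0,1)×(1,2) ⊂ ℝ² and define z(x,y) = (√x/6)·(4 − y·√(2y)). Then: (i) for every (x,y) ∈ Ω, z(x,y) + x·∂z/∂x(x,y) − y·∂z/∂y(x,y) = √x; (ii) z(x,2) = 0 for every x ∈ (0,1); (iii) ∫∫_Ω z(x,y)² dx dy < ∞; (iv) ∫∫_Ω (∂z/∂x(x,y))² dx dy = +∞. -/

import Mathlib

open MeasureTheory Set Real

/-- The domain Ω = (0,1) × (1,2). -/
def Omega1 : Set (ℝ × ℝ) := Ioo (0:ℝ) 1 ×ˢ Ioo (1:ℝ) 2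

/-- The explicit solution z(x,y) = (√x/6)·(4 − y·√(2y)) of Example 2. -/
noncomputable def zEx2 : ℝ × ℝ → ℝ := fun p =>
  Real.sqrt p.1 / 6 * (4 - p.2 * Real.sqrt (2 * p.2))

/-- Partial derivative ∂z/∂x. -/
noncomputable def zEx2x (p : ℝ × ℝ) : ℝ := deriv (fun t => zEx2 (t, p.2)) p.1

/-- Partial derivative ∂z/∂y. -/
noncomputable def zEx2y (p : ℝ × ℝ) : ℝ := deriv (fun t => zEx2 (p.1, t)) p.2

lemma zEx2x_eq {x y : ℝ} (hx : 0 < x) :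
    zEx2x (x, y) = (4 - y * Real.sqrt (2 * y)) / (12 * Real.sqrt x) := by
  have hsx : Real.sqrt x ≠ 0 := ne_of_gt (Real.sqrt_pos.2 hx)
  have h : HasDerivAt (fun t : ℝ => Real.sqrt t / 6 * (4 - y * Real.sqrt (2 * y)))
      (1 / (2 * Real.sqrt x) / 6 * (4 - y * Real.sqrt (2 * y))) x :=
    ((Real.hasDerivAt_sqrt hx.ne').div_const 6).mul_const _
  have hd := h.deriv
  show deriv (fun t => zEx2 (t, y)) x = _
  rw [show (fun t => zEx2 (t, y)) = (fun t : ℝ =>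
      Real.sqrt t / 6 * (4 - y * Real.sqrt (2 * y))) from rfl, hd]
  field_simp
  ring

lemma zEx2y_eq {x y : ℝ} (hy : 0 < y) :
    zEx2y (x, y) = -(Real.sqrt x * Real.sqrt (2 * y)) / 4 := by
  have h2y : (0:ℝ) < 2 * y := by linarith
  have hu : Real.sqrt (2 * y) ≠ 0 := ne_of_gt (Real.sqrt_pos.2 h2y)
  have hu2 : Real.sqrt (2 * y) ^ 2 = 2 * y := Real.sq_sqrt h2y.le
  have ha : HasDerivAt (fun t : ℝ => 2 * t) 2 y := by
    simpa using (hasDerivAt_id y).const_mul 2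
  have hb : HasDerivAt (fun t : ℝ => Real.sqrt (2 * t))
      (1 / (2 * Real.sqrt (2 * y)) * 2) y :=
    (Real.hasDerivAt_sqrt h2y.ne').comp y ha
  have hc : HasDerivAt (fun t : ℝ => t * Real.sqrt (2 * t))
      (1 * Real.sqrt (2 * y) + y * (1 / (2 * Real.sqrt (2 * y)) * 2)) y :=
    (hasDerivAt_id y).mul hb
  have hd : HasDerivAt (fun t : ℝ => Real.sqrt x / 6 * (4 - t * Real.sqrt (2 * t)))
      (Real.sqrt x / 6 *
        (0 - (1 * Real.sqrt (2 * y) + y * (1 / (2 * Real.sqrt (2 * y)) * 2)))) y :=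
    ((hasDerivAt_const y (4:ℝ)).sub hc).const_mul _
  have hdd := hd.deriv
  show deriv (fun t => zEx2 (x, t)) y = _
  rw [show (fun t => zEx2 (x, t)) = (fun t : ℝ =>
      Real.sqrt x / 6 * (4 - t * Real.sqrt (2 * t))) from rfl, hdd]
  have h2 : Real.sqrt 2 * Real.sqrt y * (Real.sqrt 2 * Real.sqrt y) = 2 * y := by
    rw [mul_mul_mul_comm, Real.mul_self_sqrt (by norm_num), Real.mul_self_sqrt hy.le]
  field_simp
  linear_combination (2 * Real.sqrt x) * hu2

lemma lintegral_inv_Ioo_top : ∫⁻ x in Ioo (0:ℝ) 1, ENNReal.ofReal x⁻¹ = ⊤ := by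
  by_contra h
  have h' : ∫⁻ x in Ioo (0:ℝ) 1, ENNReal.ofReal ((fun x : ℝ => x⁻¹) x) < ⊤ :=
    lt_top_iff_ne_top.2 h
  have hnn : 0 ≤ᵐ[volume.restrict (Ioo (0:ℝ) 1)] fun x : ℝ => x⁻¹ := by
    filter_upwards [ae_restrict_mem measurableSet_Ioo] with x hx
    exact inv_nonneg.2 hx.1.le
  have hint : IntegrableOn (fun x : ℝ => x⁻¹) (Ioo 0 1) :=
    ⟨(measurable_inv.aestronglyMeasurable), (hasFiniteIntegral_iff_ofReal hnn).2 h'⟩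
  have hrp : IntegrableOn (fun x : ℝ => x ^ (-1 : ℝ)) (Ioo (0:ℝ) 1) := by
    apply hint.congr_fun (fun x hx => ?_) measurableSet_Ioo
    rw [Real.rpow_neg_one]
  have := (intervalIntegral.integrableOn_Ioo_rpow_iff zero_lt_one).1 hrp
  linarith

lemma lintegral_sub_top :
    ∫⁻ p in Ioo (0:ℝ) 1 ×ˢ Ioo (1:ℝ) (3/2), ENNReal.ofReal ((p.1)⁻¹ / 144) = ⊤ := by
  rw [Measure.volume_eq_prod, ← Measure.prod_restrict, lintegral_prod _ (by fun_prop)]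
  have : ∀ x : ℝ, (∫⁻ y in Ioo (1:ℝ) (3/2), ENNReal.ofReal (x⁻¹ / 144)) =
      ENNReal.ofReal (x⁻¹ / 144) * ENNReal.ofReal (1/2) := by
    intro x
    rw [setLIntegral_const, Real.volume_Ioo]
    norm_num
  simp only [this]
  have hrw : ∀ x : ℝ, ENNReal.ofReal (x⁻¹ / 144) * ENNReal.ofReal (1/2) =
      ENNReal.ofReal x⁻¹ * (ENNReal.ofReal 144)⁻¹ * ENNReal.ofReal (1/2) := by
    intro x
    rw [ENNReal.ofReal_div_of_pos (by norm_num), div_eq_mul_inv]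
  simp only [hrw]
  rw [lintegral_mul_const'' _ (by fun_prop), lintegral_mul_const'' _ (by fun_prop),
    lintegral_inv_Ioo_top]
  rw [ENNReal.top_mul (by simp), ENNReal.top_mul (by norm_num)]

lemma sqrt_two_y_le_two {y : ℝ} (hy : y ≤ 2) : Real.sqrt (2 * y) ≤ 2 := by
  have h := Real.sqrt_le_sqrt (show 2 * y ≤ 4 by linarith)
  rwa [show (4:ℝ) = 2 ^ 2 by norm_num, Real.sqrt_sq (by norm_num : (0:ℝ) ≤ 2)] at h


theorem stmt_1 :
    (∀ p ∈ Omega1, zEx2 p + p.1 * zEx2x p - p.2 * zEx2y p = Real.sqrt p.1) ∧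
    (∀ x ∈ Ioo (0:ℝ) 1, zEx2 (x, 2) = 0) ∧
    (∫⁻ p in Omega1, ENNReal.ofReal ((zEx2 p) ^ 2) < ⊤) ∧
    (∫⁻ p in Omega1, ENNReal.ofReal ((zEx2x p) ^ 2) = ⊤) := by
  have mΩ : MeasurableSet Omega1 := measurableSet_Ioo.prod measurableSet_Ioo
  refine ⟨?_, ?_, ?_, ?_⟩
  · -- (i) the PDE
    rintro ⟨x, y⟩ ⟨hx, hy⟩
    simp only [Omega1, mem_Ioo] at hx hy
    have hy0 : (0:ℝ) < y := by linarith [hy.1]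
    rw [show ((x, y) : ℝ × ℝ).1 = x from rfl, show ((x, y) : ℝ × ℝ).2 = y from rfl,
      zEx2x_eq hx.1, zEx2y_eq hy0]
    show Real.sqrt x / 6 * (4 - y * Real.sqrt (2 * y)) + _ - _ = _
    set s := Real.sqrt x with hs
    set u := Real.sqrt (2 * y) with hu
    have hs0 : 0 < s := Real.sqrt_pos.2 hx.1
    have hs2 : s ^ 2 = x := Real.sq_sqrt hx.1.le
    field_simp
    linear_combination (24 * (y * u - 4)) * hs2
  · -- (ii) boundary value
    intro x hx
    have h4 : Real.sqrt (2 * 2 : ℝ) = 2 := by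
      rw [show (2:ℝ) * 2 = 2 ^ 2 by norm_num, Real.sqrt_sq (by norm_num : (0:ℝ) ≤ 2)]
    simp [zEx2, h4]
    norm_num
  · -- (iii) z ∈ L²
    have h1 : (∫⁻ p in Omega1, ENNReal.ofReal ((zEx2 p) ^ 2)) ≤
        ∫⁻ p in Omega1, (1 : ENNReal) := by
      rw [← lintegral_indicator mΩ, ← lintegral_indicator mΩ]
      apply lintegral_mono
      intro p
      by_cases hp : p ∈ Omega1
      · rw [indicator_of_mem hp, indicator_of_mem hp]
        obtain ⟨hx, hy⟩ := hp
        simp only [mem_Ioo] at hx hy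
        apply ENNReal.ofReal_le_one.2
        have hsx0 : 0 ≤ Real.sqrt p.1 := Real.sqrt_nonneg _
        have hsx1 : Real.sqrt p.1 ≤ 1 := by
          rw [show (1:ℝ) = Real.sqrt 1 by simp]
          exact Real.sqrt_le_sqrt hx.2.le
        have hu0 : 0 ≤ Real.sqrt (2 * p.2) := Real.sqrt_nonneg _
        have hu2 : Real.sqrt (2 * p.2) ≤ 2 := sqrt_two_y_le_two hy.2.le
        have hC0 : 0 ≤ 4 - p.2 * Real.sqrt (2 * p.2) := by nlinarith [hy.2]
        have hC4 : 4 - p.2 * Real.sqrt (2 * p.2) ≤ 4 := by nlinarith [hy.1]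
        have hzdef : zEx2 p = Real.sqrt p.1 / 6 * (4 - p.2 * Real.sqrt (2 * p.2)) := rfl
        rw [hzdef]
        have hmul : Real.sqrt p.1 * (4 - p.2 * Real.sqrt (2 * p.2)) ≤ 1 * 4 :=
          mul_le_mul hsx1 hC4 hC0 zero_le_one
        nlinarith [mul_nonneg hsx0 hC0]
      · rw [indicator_of_notMem hp, indicator_of_notMem hp]
    have h2 : (∫⁻ _ in Omega1, (1 : ENNReal)) < ⊤ := by
      rw [setLIntegral_one, Omega1, Measure.volume_eq_prod, Measure.prod_prod,
        Real.volume_Ioo, Real.volume_Ioo]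
      exact ENNReal.mul_lt_top ENNReal.ofReal_lt_top ENNReal.ofReal_lt_top
    exact lt_of_le_of_lt h1 h2
  · -- (iv) ∂z/∂x ∉ L²
    set S : Set (ℝ × ℝ) := Ioo (0:ℝ) 1 ×ˢ Ioo (1:ℝ) (3/2) with hS
    have mS : MeasurableSet S := measurableSet_Ioo.prod measurableSet_Ioo
    have hsub : S ⊆ Omega1 :=
      prod_mono subset_rfl (Ioo_subset_Ioo le_rfl (by norm_num))
    refine top_le_iff.1 ?_
    calc (⊤ : ENNReal) = ∫⁻ p in S, ENNReal.ofReal ((p.1)⁻¹ / 144) := lintegral_sub_top.symm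
      _ ≤ ∫⁻ p in S, ENNReal.ofReal ((zEx2x p) ^ 2) := by
          rw [← lintegral_indicator mS, ← lintegral_indicator mS]
          apply lintegral_mono
          intro p
          by_cases hp : p ∈ S
          · rw [indicator_of_mem hp, indicator_of_mem hp]
            obtain ⟨hx, hy⟩ := hp
            simp only [mem_Ioo] at hx hy
            apply ENNReal.ofReal_le_ofReal
            have hp1 : p = (p.1, p.2) := rfl
            rw [hp1, zEx2x_eq hx.1]
            have hu0 : 0 ≤ Real.sqrt (2 * p.2) := Real.sqrt_nonneg _
            have hu2 : Real.sqrt (2 * p.2) ≤ 2 := sqrt_two_y_le_two (by linarith [hy.2])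
            have hC1 : 1 ≤ 4 - p.2 * Real.sqrt (2 * p.2) := by nlinarith [hy.2]
            have h144 : (12 * Real.sqrt p.1) ^ 2 = 144 * p.1 := by
              rw [mul_pow, Real.sq_sqrt hx.1.le]; norm_num
            rw [div_pow, h144]
            rw [show (p.1)⁻¹ / 144 = 1 / (144 * p.1) by rw [inv_eq_one_div, div_div, mul_comm]]
            gcongr
            · nlinarith [hx.1]
            · nlinarith
          · rw [indicator_of_notMem hp, indicator_of_notMem hp]
      _ ≤ ∫⁻ p in Omega1, ENNReal.ofReal ((zEx2x p) ^ 2) := lintegral_mono_set hsub
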